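/- Let γ ≥ 1 and let {θ_k}_{k≥−1} ⊆ (0,1] with θ_{−1} = θ_0 = 1 satisfy, for all k ≥ 1, θ_k ≤ (α−1)/(k+α−1) for some α ≥ γ+1, and ϑ_k := θ_{k−1}^{−γ} − (1−θ_k)·θ_k^{−γ} ≥ 0. Then θ_k ≥ 1/(k+γ) for all k ≥ 0, and Σ_{i=0}^{k} ϑ_i ≤ 2 + (k+1+γ)^γ/γ for all k ≥ 0. -/

import Mathlib

open Filter Topology

/-- Bernoulli-type: for `x > 0`, `γ ≥ 1`: `x^γ + γ * x^(γ-1) ≤ (x+1)^γ`. -/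
lemma aux_bernoulli {x γ : ℝ} (hx : 0 < x) (hγ : 1 ≤ γ) :
    x ^ γ + γ * x ^ (γ - 1) ≤ (x + 1) ^ γ := by
  have hb : 1 + γ * (1/x) ≤ (1 + 1/x) ^ γ := by
    apply one_add_mul_self_le_rpow_one_add _ hγ
    have : (0:ℝ) ≤ 1/x := by positivity
    linarith
  have h1 : (0:ℝ) ≤ x ^ γ := Real.rpow_nonneg hx.le _
  have hmul := mul_le_mul_of_nonneg_right hb h1
  have he : (1 + 1/x) ^ γ * x ^ γ = (x + 1) ^ γ := by
    rw [← Real.mul_rpow (by positivity) hx.le]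
    congr 1
    field_simp
  have he2 : (1 + γ * (1/x)) * x ^ γ = x ^ γ + γ * x ^ (γ - 1) := by
    have hxe : x ^ (γ - 1) = x ^ γ / x := by
      rw [Real.rpow_sub hx, Real.rpow_one]
    rw [hxe]; field_simp
  rw [he2, he] at hmul
  exact hmul

/-- **Bounds for the inertial parameter sequence** (Lemma 4.1). Let `γ ≥ 1` and let
`{θ_k}_{k ≥ −1} ⊆ (0,1]` with `θ_{−1} = θ_0 = 1` satisfy, for all `k ≥ 1`,
`θ_k ≤ (α−1)/(k+α−1)` for some `α ≥ γ+1`, and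
`ϑ_k := θ_{k−1}^{−γ} − (1−θ_k)·θ_k^{−γ} ≥ 0`. Then `θ_k ≥ 1/(k+γ)` for all `k ≥ 0` and
`Σ_{i=0}^{k} ϑ_i ≤ 2 + (k+1+γ)^γ/γ` for all `k ≥ 0`.
(The sequence is represented over `ℕ`; since `θ_{−1} = θ_0 = 1`, the term `θ (k-1)` with
truncated subtraction at `k = 0` correctly represents `θ_{−1}`, giving `ϑ_0 = 1`.) -/
theorem theta_seq_bounds
    (γ α : ℝ) (hγ : 1 ≤ γ) (hα : γ + 1 ≤ α)
    (θ : ℕ → ℝ) (hθmem : ∀ k, θ k ∈ Set.Ioc (0:ℝ) 1) (hθ0 : θ 0 = 1)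
    (hθle : ∀ k : ℕ, 1 ≤ k → θ k ≤ (α - 1) / ((k : ℝ) + α - 1))
    (hϑ : ∀ k : ℕ, 1 ≤ k → 0 ≤ (θ (k-1)) ^ (-γ) - (1 - θ k) * (θ k) ^ (-γ)) :
    (∀ k : ℕ, 1 / ((k : ℝ) + γ) ≤ θ k) ∧
      ∀ k : ℕ, ∑ i ∈ Finset.range (k+1), ((θ (i-1)) ^ (-γ) - (1 - θ i) * (θ i) ^ (-γ)) ≤
        2 + ((k : ℝ) + 1 + γ) ^ γ / γ := by
  have hγ0 : 0 < γ := lt_of_lt_of_le one_pos hγ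
  have hθpos : ∀ k, 0 < θ k := fun k => (hθmem k).1
  have hθ1 : ∀ k, θ k ≤ 1 := fun k => (hθmem k).2
  -- part 1
  have part1 : ∀ k : ℕ, 1 / ((k : ℝ) + γ) ≤ θ k := by
    intro k
    induction k with
    | zero =>
      rw [hθ0]
      simp only [Nat.cast_zero, zero_add]
      rw [div_le_one hγ0]
      exact hγ
    | succ k ih =>
      by_contra hcon
      push_neg at hcon
      have hc1 : 1 ≤ (k : ℝ) + γ := by
        have : (0:ℝ) ≤ (k:ℝ) := Nat.cast_nonneg k
        linarith
      have hc0 : 0 < (k : ℝ) + γ := lt_of_lt_of_le one_pos hc1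
      have hcon' : θ (k+1) < 1 / (((k:ℝ) + γ) + 1) := by
        have hcast : ((k+1 : ℕ) : ℝ) = (k : ℝ) + 1 := by push_cast; ring
        rw [hcast] at hcon
        exact lt_of_lt_of_eq hcon (by ring)
      have hb : 0 < θ (k+1) := hθpos _
      -- key1 : (θ k)^(-γ) ≤ (k+γ)^γ
      have hinva : (θ k)⁻¹ ≤ (k:ℝ) + γ := by
        rw [inv_le_comm₀ (hθpos k) hc0, ← one_div]
        exact ih
      have key1 : (θ k) ^ (-γ) ≤ ((k:ℝ) + γ) ^ γ := by
        rw [Real.rpow_neg (hθpos k).le, ← Real.inv_rpow (hθpos k).le]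
        exact Real.rpow_le_rpow (inv_nonneg.mpr (hθpos k).le) hinva hγ0.le
      -- key2 : (1 - θ (k+1)) * (θ (k+1))^(-γ) > (k+γ)^γ
      have hinvb : ((k:ℝ) + γ) + 1 < (θ (k+1))⁻¹ := by
        rw [lt_inv_comm₀ (by positivity) hb, ← one_div]
        exact hcon'
      have hbγ : (((k:ℝ) + γ) + 1) ^ γ < (θ (k+1)) ^ (-γ) := by
        rw [Real.rpow_neg hb.le, ← Real.inv_rpow hb.le]
        exact Real.rpow_lt_rpow (by positivity) hinvb hγ0
      have h1b : ((k:ℝ) + γ) / (((k:ℝ) + γ) + 1) < 1 - θ (k+1) := by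
        have h : ((k:ℝ) + γ) / (((k:ℝ) + γ) + 1) = 1 - 1/(((k:ℝ) + γ)+1) := by
          field_simp
          ring
        rw [h]
        linarith
      have hfrac0 : 0 < ((k:ℝ) + γ) / (((k:ℝ) + γ)+1) := by positivity
      have hcγpos : (0:ℝ) < (((k:ℝ) + γ)+1) ^ γ :=
        Real.rpow_pos_of_pos (by positivity) _
      have key2 : ((k:ℝ) + γ) / (((k:ℝ) + γ)+1) * (((k:ℝ) + γ)+1) ^ γ
          < (1 - θ (k+1)) * (θ (k+1)) ^ (-γ) :=
        mul_lt_mul h1b hbγ.le hcγpos (by linarith)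
      have hsimp : ((k:ℝ) + γ) / (((k:ℝ) + γ)+1) * (((k:ℝ) + γ)+1) ^ γ
          = ((k:ℝ) + γ) * (((k:ℝ) + γ)+1) ^ (γ - 1) := by
        rw [Real.rpow_sub (by positivity), Real.rpow_one]
        field_simp
      have hmono : ((k:ℝ) + γ) ^ (γ - 1) ≤ (((k:ℝ) + γ)+1) ^ (γ-1) :=
        Real.rpow_le_rpow hc0.le (by linarith) (by linarith)
      have hcc : ((k:ℝ) + γ) ^ γ = ((k:ℝ) + γ) * ((k:ℝ) + γ) ^ (γ - 1) := by
        rw [Real.rpow_sub hc0, Real.rpow_one]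
        field_simp
      have hfinal : ((k:ℝ) + γ) ^ γ < (1 - θ (k+1)) * (θ (k+1)) ^ (-γ) := by
        calc ((k:ℝ) + γ) ^ γ = ((k:ℝ) + γ) * ((k:ℝ) + γ) ^ (γ-1) := hcc
        _ ≤ ((k:ℝ) + γ) * (((k:ℝ) + γ)+1) ^ (γ-1) := by nlinarith
        _ = ((k:ℝ) + γ) / (((k:ℝ) + γ)+1) * (((k:ℝ) + γ)+1) ^ γ := hsimp.symm
        _ < _ := key2
      have hϑ1 := hϑ (k+1) (by omega)
      simp only [Nat.add_sub_cancel] at hϑ1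
      linarith
  refine ⟨part1, ?_⟩
  intro k
  -- rewrite each term
  have hterm : ∀ i : ℕ, (θ (i-1)) ^ (-γ) - (1 - θ i) * (θ i) ^ (-γ)
      = ((θ (i-1)) ^ (-γ) - (θ i) ^ (-γ)) + θ i ^ (1 - γ) := by
    intro i
    have : θ i ^ (1 - γ) = θ i * θ i ^ (-γ) := by
      rw [show (1 - γ) = 1 + (-γ) by ring, Real.rpow_add (hθpos i), Real.rpow_one]
    rw [this]; ring
  rw [Finset.sum_congr rfl (fun i _ => hterm i), Finset.sum_add_distrib]
  -- telescoping first sum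
  have htel1 : ∑ i ∈ Finset.range (k+1), ((θ (i-1)) ^ (-γ) - (θ i) ^ (-γ)) ≤ 1 := by
    have hcg : ∀ i ∈ Finset.range (k+1), (θ (i-1)) ^ (-γ) - (θ i) ^ (-γ)
        = (fun j => (θ (j-1)) ^ (-γ)) i - (fun j => (θ (j-1)) ^ (-γ)) (i+1) := by
      intro i _; simp
    rw [Finset.sum_congr rfl hcg, Finset.sum_range_sub']
    simp only [Nat.zero_sub, Nat.add_sub_cancel, hθ0]
    have h1 : (1:ℝ) ^ (-γ) = 1 := Real.one_rpow _
    have h2 : (1:ℝ) ≤ (θ k) ^ (-γ) := by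
      rw [Real.rpow_neg (hθpos k).le,
        le_inv_comm₀ one_pos (Real.rpow_pos_of_pos (hθpos k) _), inv_one]
      calc (θ k) ^ γ ≤ 1 ^ γ := Real.rpow_le_rpow (hθpos k).le (hθ1 k) hγ0.le
      _ = 1 := Real.one_rpow _
    rw [h1]; linarith
  -- second sum
  have hsum2 : ∑ i ∈ Finset.range (k+1), θ i ^ (1 - γ) ≤ ((k:ℝ) + 1 + γ) ^ γ / γ := by
    set f : ℕ → ℝ := fun j => ((j:ℝ) + γ) ^ γ with hf
    have hstep : ∀ i : ℕ, θ i ^ (1 - γ) ≤ (f (i+1) - f i) / γ := by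
      intro i
      have hx0 : (0:ℝ) < (i:ℝ) + γ := by positivity
      have h1 : θ i ^ (1-γ) ≤ ((i:ℝ) + γ) ^ (γ - 1) := by
        have hinv : (θ i)⁻¹ ≤ (i:ℝ) + γ := by
          rw [inv_le_comm₀ (hθpos i) hx0, ← one_div]
          exact part1 i
        rw [show (1 - γ) = -(γ-1) by ring, Real.rpow_neg (hθpos i).le,
          ← Real.inv_rpow (hθpos i).le]
        exact Real.rpow_le_rpow (inv_nonneg.mpr (hθpos i).le) hinv (by linarith)
      have h2 := aux_bernoulli hx0 hγ
      rw [le_div_iff₀ hγ0]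
      have hfe : f (i+1) = (((i:ℝ) + γ) + 1) ^ γ := by
        simp only [hf]
        push_cast
        ring_nf
      have hfi : f i = ((i:ℝ) + γ) ^ γ := rfl
      rw [hfe, hfi]
      calc θ i ^ (1-γ) * γ ≤ ((i:ℝ)+γ) ^ (γ-1) * γ :=
            mul_le_mul_of_nonneg_right h1 hγ0.le
      _ ≤ (((i:ℝ)+γ) + 1) ^ γ - ((i:ℝ)+γ) ^ γ := by nlinarith
    calc ∑ i ∈ Finset.range (k+1), θ i ^ (1 - γ)
        ≤ ∑ i ∈ Finset.range (k+1), (f (i+1) - f i) / γ :=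
          Finset.sum_le_sum (fun i _ => hstep i)
      _ = (∑ i ∈ Finset.range (k+1), (f (i+1) - f i)) / γ := by
          rw [Finset.sum_div]
      _ = (f (k+1) - f 0) / γ := by rw [Finset.sum_range_sub f]
      _ ≤ ((k:ℝ) + 1 + γ) ^ γ / γ := by
          have hfk : f (k+1) = ((k:ℝ) + 1 + γ) ^ γ := by
            simp only [hf]; push_cast; ring_nf
          have hf0 : (0:ℝ) ≤ f 0 := by
            simp only [hf]
            exact Real.rpow_nonneg (by positivity) _
          rw [hfk]
          gcongr
          linarith
  linarith
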